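/- Let G be a distance-regular graph with diameter D and let u, v be adjacent vertices of G. Define f on the vertex set of G by: f(z) = φ_i if d(v,z) = i and d(u,z) = i+1; f(z) = −φ_i if d(u,z) = i and d(v,z) = i+1; f(z) = 0 if d(u,z) = d(v,z). (In particular f(u) = φ_0 and f(v) = −φ_0.) Then f is harmonic at every vertex z distinct from u and v, i.e., Σ_{x ∼ z} (f(x) − f(z)) = 0 for all z ∉ {u, v}. -/

import Mathlib

open Finset

/-- `G` is a distance-regular graph with diameter `D` and intersection numbers
`b i` and `c i`: for all vertices `x, y` at distance `i ≤ D`, `y` has exactly `c i`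
neighbors at distance `i - 1` from `x` and exactly `b i` neighbors at distance
`i + 1` from `x`. -/
structure SimpleGraph.IsDRG {V : Type*} [Fintype V] [DecidableEq V] (G : SimpleGraph V)
    [DecidableRel G.Adj] (D : ℕ) (b c : ℕ → ℕ) : Prop where
  connected : G.Connected
  dist_le : ∀ x y : V, G.dist x y ≤ D
  exists_dist_eq : ∃ x y : V, G.dist x y = D
  card_c : ∀ i, i ≤ D → ∀ x y : V, G.dist x y = i →
    ((G.neighborFinset y).filter fun z => G.dist x z + 1 = i).card = c i
  card_b : ∀ i, i ≤ D → ∀ x y : V, G.dist x y = i →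
    ((G.neighborFinset y).filter fun z => G.dist x z = i + 1).card = b i

/-- The potentials `φ i` of a distance-regular graph with `n` vertices, diameter `D`,
valency `k` and intersection numbers `b`, `c` : `φ 0 = n - 1`,
`φ i = (c i * φ (i-1) - k) / b i` for `1 ≤ i ≤ D - 1`, and `φ i = 0` for `i ≥ D`. -/
def drgPhi (n D k : ℕ) (b c : ℕ → ℕ) : ℕ → ℚ
  | 0 => (n : ℚ) - 1
  | i + 1 =>
    if i + 1 < D then ((c (i + 1) : ℚ) * drgPhi n D k b c i - (k : ℚ)) / (b (i + 1) : ℚ)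
    else 0

namespace DRGHelper

variable {V : Type*} [Fintype V] [DecidableEq V] {G : SimpleGraph V} [DecidableRel G.Adj]
  {D : ℕ} {b c : ℕ → ℕ}

lemma exists_pred (hconn : G.Connected) {x y : V} {m : ℕ} (hxy : G.dist x y = m)
    (hm : m ≠ 0) : ∃ w : V, G.Adj w y ∧ G.dist x w + 1 = m := by
  obtain ⟨p, hp⟩ := (hconn x y).exists_walk_length_eq_dist
  have hlen : p.reverse.length = m := by rw [SimpleGraph.Walk.length_reverse, hp, hxy]
  have hnil : ¬ p.reverse.Nil := by
    rw [SimpleGraph.Walk.nil_iff_length_eq, hlen]; exact hm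
  obtain ⟨w, hadj, q, hq⟩ := SimpleGraph.Walk.not_nil_iff.mp hnil
  refine ⟨w, hadj.symm, ?_⟩
  have hq' : q.length = m - 1 := by
    have h := hlen; rw [hq, SimpleGraph.Walk.length_cons] at h; omega
  have h1 : G.dist x w ≤ m - 1 := by
    have h := SimpleGraph.dist_le q.reverse
    rwa [SimpleGraph.Walk.length_reverse, hq'] at h
  have hwy : G.dist w y = 1 := SimpleGraph.dist_eq_one_iff_adj.mpr hadj.symm
  have h2 : G.dist x y ≤ G.dist x w + G.dist w y := hconn.dist_triangle
  omega

lemma exists_dist_eq_of_le (hG : G.IsDRG D b c) {m : ℕ} (hm : m ≤ D) :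
    ∃ x y : V, G.dist x y = m := by
  obtain ⟨x, y, hxy⟩ := hG.exists_dist_eq
  suffices h : ∀ j, ∃ w, G.dist x w = D - j by
    obtain ⟨w, hw⟩ := h (D - m)
    exact ⟨x, w, by omega⟩
  intro j
  induction j with
  | zero => exact ⟨y, by simpa using hxy⟩
  | succ j ih =>
    obtain ⟨w, hw⟩ := ih
    by_cases hj : D - j = 0
    · exact ⟨w, by omega⟩
    · obtain ⟨w', hadj, hw'⟩ := exists_pred hG.connected hw hj
      exact ⟨w', by omega⟩

lemma b_ne_zero (hG : G.IsDRG D b c) {m : ℕ} (hm : m < D) : b m ≠ 0 := by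
  obtain ⟨x, y, hxy⟩ := exists_dist_eq_of_le hG (show m + 1 ≤ D from hm)
  obtain ⟨w, hadj, hw⟩ := exists_pred hG.connected hxy (by omega)
  have hcard := hG.card_b m (by omega) x w (by omega)
  rw [← hcard]
  exact Finset.card_ne_zero_of_mem (Finset.mem_filter.mpr
    ⟨(SimpleGraph.mem_neighborFinset _ _ _).mpr hadj, hxy⟩)

lemma c_one (hG : G.IsDRG D b c) (hD : 1 ≤ D) : c 1 = 1 := by
  obtain ⟨x, y, hxy⟩ := exists_dist_eq_of_le hG hD
  have hcard := hG.card_c 1 hD x y hxy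
  have hadj : G.Adj x y := SimpleGraph.dist_eq_one_iff_adj.mp hxy
  rw [← hcard]
  have hset : ((G.neighborFinset y).filter fun z => G.dist x z + 1 = 1) = {x} := by
    ext w
    simp only [Finset.mem_filter, SimpleGraph.mem_neighborFinset, Finset.mem_singleton]
    constructor
    · rintro ⟨-, hw⟩
      have h0 : G.dist x w = 0 := by omega
      exact (hG.connected.dist_eq_zero_iff.mp h0).symm
    · rintro rfl
      exact ⟨hadj.symm, by simp [SimpleGraph.dist_self]⟩
  rw [hset, Finset.card_singleton]

lemma degree_eq (hG : G.IsDRG D b c) (z : V) : (G.neighborFinset z).card = b 0 := by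
  have hcard := hG.card_b 0 (Nat.zero_le D) z z SimpleGraph.dist_self
  rw [← hcard]
  congr 1
  symm
  refine Finset.filter_eq_self.mpr fun x hx => ?_
  exact SimpleGraph.dist_eq_one_iff_adj.mpr ((SimpleGraph.mem_neighborFinset _ _ _).mp hx)

lemma expand (P Q : V → Prop) [DecidablePred P] [DecidablePred Q] :
    ∑ y ∈ univ.filter P, ((G.neighborFinset y).filter Q).card
      = ∑ y : V, ∑ x : V, if P y ∧ G.Adj y x ∧ Q x then 1 else 0 := by
  rw [Finset.sum_filter]
  refine Finset.sum_congr rfl fun y _ => ?_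
  by_cases hP : P y
  · rw [if_pos hP, Finset.card_filter, SimpleGraph.neighborFinset_eq_filter, Finset.sum_filter]
    refine Finset.sum_congr rfl fun x _ => ?_
    by_cases h1 : G.Adj y x <;> by_cases h2 : Q x <;> simp [h1, h2, hP]
  · rw [if_neg hP]
    exact (Finset.sum_eq_zero fun x _ => by simp [hP]).symm

lemma double_count (hG : G.IsDRG D b c) (w : V) {i : ℕ} (hi : i + 1 ≤ D) :
    (univ.filter fun y => G.dist w y = i).card * b i
      = (univ.filter fun y => G.dist w y = i + 1).card * c (i + 1) := by
  have h1 : ∑ y ∈ univ.filter fun y => G.dist w y = i,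
      ((G.neighborFinset y).filter fun x => G.dist w x = i + 1).card
        = (univ.filter fun y => G.dist w y = i).card * b i := by
    rw [Finset.sum_congr rfl fun y hy => hG.card_b i (by omega) w y (Finset.mem_filter.mp hy).2,
      Finset.sum_const, smul_eq_mul]
  have h2 : ∑ y ∈ univ.filter fun y => G.dist w y = i + 1,
      ((G.neighborFinset y).filter fun x => G.dist w x + 1 = i + 1).card
        = (univ.filter fun y => G.dist w y = i + 1).card * c (i + 1) := by
    rw [Finset.sum_congr rfl fun y hy => hG.card_c (i+1) hi w y (Finset.mem_filter.mp hy).2,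
      Finset.sum_const, smul_eq_mul]
  rw [← h1, ← h2, expand, expand, Finset.sum_comm]
  refine Finset.sum_congr rfl fun y _ => Finset.sum_congr rfl fun x _ => ?_
  refine if_congr ⟨fun ⟨ha, hb, hc⟩ => ⟨hc, hb.symm, by omega⟩,
    fun ⟨ha, hb, hc⟩ => ⟨by omega, hb.symm, ha⟩⟩ rfl rfl

lemma sum_spheres (hG : G.IsDRG D b c) (w : V) :
    ∑ j ∈ Icc 0 D, (univ.filter fun z => G.dist w z = j).card = Fintype.card V := by
  rw [← Finset.card_univ]
  exact (Finset.card_eq_sum_card_fiberwise (f := fun z => G.dist w z)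
    fun x _ => Finset.mem_Icc.mpr ⟨Nat.zero_le _, hG.dist_le w x⟩).symm

lemma key (hG : G.IsDRG D b c) (hD : 1 ≤ D) :
    (c D : ℚ) * drgPhi (Fintype.card V) D (b 0) b c (D - 1) = (b 0 : ℚ) := by
  obtain ⟨w, y, hwy⟩ := hG.exists_dist_eq
  have ha0 : (univ.filter fun z => G.dist w z = 0) = {w} := by
    ext z
    simp only [Finset.mem_filter, Finset.mem_univ, true_and, Finset.mem_singleton,
      hG.connected.dist_eq_zero_iff]
    exact eq_comm
  have ha1 : (univ.filter fun z => G.dist w z = 1).card = b 0 := by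
    have : (univ.filter fun z => G.dist w z = 1) = G.neighborFinset w := by
      ext z
      simp only [Finset.mem_filter, Finset.mem_univ, true_and,
        SimpleGraph.mem_neighborFinset, SimpleGraph.dist_eq_one_iff_adj]
    rw [this, degree_eq hG]
  have haD : ((univ.filter fun z => G.dist w z = D).card : ℚ) ≠ 0 := by
    refine Nat.cast_ne_zero.mpr (Finset.card_ne_zero_of_mem
      (Finset.mem_filter.mpr ⟨Finset.mem_univ y, hwy⟩))
  have hsum : ∑ j ∈ Icc 0 D, ((univ.filter fun z => G.dist w z = j).card : ℚ)
      = Fintype.card V := by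
    rw [← Nat.cast_sum, sum_spheres hG w]
  have hstep : ∀ i, i + 1 ≤ D →
      ((univ.filter fun z => G.dist w z = i + 1).card : ℚ) * c (i + 1)
          * drgPhi (Fintype.card V) D (b 0) b c i
        = (b 0 : ℚ) * ∑ j ∈ Icc (i + 1) D, ((univ.filter fun z => G.dist w z = j).card : ℚ) := by
    intro i
    induction i with
    | zero =>
      intro h1
      have hIcc : Finset.Icc 0 D = insert 0 (Finset.Icc 1 D) := by
        ext j; simp; omega
      have h0 : (0 : ℕ) ∉ Finset.Icc 1 D := by simp
      rw [hIcc, Finset.sum_insert h0, ha0, Finset.card_singleton] at hsum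
      have hsum1 : ∑ j ∈ Icc 1 D, ((univ.filter fun z => G.dist w z = j).card : ℚ)
          = (Fintype.card V : ℚ) - 1 := by
        push_cast at hsum ⊢; linarith
      show ((univ.filter fun z => G.dist w z = 1).card : ℚ) * c 1
          * drgPhi (Fintype.card V) D (b 0) b c 0
        = (b 0 : ℚ) * ∑ j ∈ Icc 1 D, ((univ.filter fun z => G.dist w z = j).card : ℚ)
      rw [ha1, c_one hG hD, hsum1]
      show (b 0 : ℚ) * (1 : ℕ) * ((Fintype.card V : ℚ) - 1) = _
      push_cast
      ring
    | succ i ih =>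
      intro h2
      have ih' := ih (by omega)
      have hbne : (b (i + 1) : ℚ) ≠ 0 := Nat.cast_ne_zero.mpr (b_ne_zero hG (by omega))
      have hrec : (b (i + 1) : ℚ) * drgPhi (Fintype.card V) D (b 0) b c (i + 1)
          = (c (i + 1) : ℚ) * drgPhi (Fintype.card V) D (b 0) b c i - (b 0 : ℚ) := by
        simp only [drgPhi]
        rw [if_pos (show i + 1 < D by omega)]
        field_simp
      have hdc : ((univ.filter fun z => G.dist w z = i + 1).card : ℚ) * b (i + 1)
          = ((univ.filter fun z => G.dist w z = i + 2).card : ℚ) * c (i + 2) := by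
        exact_mod_cast double_count hG w (show (i + 1) + 1 ≤ D from h2)
      have hIcc : Finset.Icc (i + 1) D = insert (i + 1) (Finset.Icc (i + 2) D) := by
        ext j; simp; omega
      have hnm : i + 1 ∉ Finset.Icc (i + 2) D := by simp
      rw [hIcc, Finset.sum_insert hnm] at ih'
      show ((univ.filter fun z => G.dist w z = i + 2).card : ℚ) * c (i + 2)
          * drgPhi (Fintype.card V) D (b 0) b c (i + 1)
        = (b 0 : ℚ) * ∑ j ∈ Icc (i + 2) D, ((univ.filter fun z => G.dist w z = j).card : ℚ)
      calc ((univ.filter fun z => G.dist w z = i + 2).card : ℚ) * c (i + 2)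
          * drgPhi (Fintype.card V) D (b 0) b c (i + 1)
          = ((univ.filter fun z => G.dist w z = i + 1).card : ℚ) * b (i + 1)
            * drgPhi (Fintype.card V) D (b 0) b c (i + 1) := by rw [hdc]
        _ = ((univ.filter fun z => G.dist w z = i + 1).card : ℚ)
            * ((c (i + 1) : ℚ) * drgPhi (Fintype.card V) D (b 0) b c i - (b 0 : ℚ)) := by
              rw [mul_assoc, hrec]
        _ = ((univ.filter fun z => G.dist w z = i + 1).card : ℚ) * c (i + 1)
            * drgPhi (Fintype.card V) D (b 0) b c i
            - (b 0 : ℚ) * ((univ.filter fun z => G.dist w z = i + 1).card : ℚ) := by ring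
        _ = (b 0 : ℚ) * ∑ j ∈ Icc (i + 2) D,
            ((univ.filter fun z => G.dist w z = j).card : ℚ) := by rw [ih']; ring
  have hfinal := hstep (D - 1) (by omega)
  rw [show D - 1 + 1 = D from by omega] at hfinal
  rw [Finset.Icc_self, Finset.sum_singleton] at hfinal
  have h : ((univ.filter fun z => G.dist w z = D).card : ℚ)
      * ((c D : ℚ) * drgPhi (Fintype.card V) D (b 0) b c (D - 1))
      = ((univ.filter fun z => G.dist w z = D).card : ℚ) * (b 0 : ℚ) := by
    rw [← mul_assoc]; linarith [hfinal]
  exact mul_left_cancel₀ haD h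

lemma psi (hG : G.IsDRG D b c) (hD : 1 ≤ D) {l : ℕ} (hl : l + 1 ≤ D) :
    (c (l + 1) : ℚ) * drgPhi (Fintype.card V) D (b 0) b c l
      - (b (l + 1) : ℚ) * drgPhi (Fintype.card V) D (b 0) b c (l + 1) = (b 0 : ℚ) := by
  rcases lt_or_eq_of_le hl with h | h
  · have hbne : (b (l + 1) : ℚ) ≠ 0 := Nat.cast_ne_zero.mpr (b_ne_zero hG h)
    simp only [drgPhi]
    rw [if_pos h]
    field_simp
    ring
  · simp only [drgPhi]
    rw [if_neg (by omega), mul_zero, sub_zero, h, show l = D - 1 from by omega]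
    exact key hG hD

lemma aux_eq (hG : G.IsDRG D b c) (u v : V) (huv : G.Adj u v) (f : V → ℚ)
    (hf_pos : ∀ (z : V) (i : ℕ), G.dist v z = i → G.dist u z = i + 1 →
      f z = drgPhi (Fintype.card V) D (b 0) b c i)
    (hf_neg : ∀ (z : V) (i : ℕ), G.dist u z = i → G.dist v z = i + 1 →
      f z = -(drgPhi (Fintype.card V) D (b 0) b c i))
    (hf_zero : ∀ z : V, G.dist u z = G.dist v z → f z = 0)
    (z : V) (hzu : z ≠ u) (heq : G.dist u z = G.dist v z) :
    ∑ x ∈ G.neighborFinset z, (f x - f z) = 0 := by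
  have h1 : G.dist u v = 1 := SimpleGraph.dist_eq_one_iff_adj.mpr huv
  have hvu : G.dist v u = 1 := by rw [SimpleGraph.dist_comm]; exact h1
  have huz0 : G.dist u z ≠ 0 := fun h => hzu (hG.connected.dist_eq_zero_iff.mp h).symm
  obtain ⟨m, huz⟩ : ∃ m, G.dist u z = m + 1 := ⟨G.dist u z - 1, by omega⟩
  have hvz : G.dist v z = m + 1 := by omega
  have hDz : m + 1 ≤ D := huz ▸ hG.dist_le u z
  have hfz : f z = 0 := hf_zero z heq
  have hA := hG.card_c (m + 1) hDz u z huz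
  have hA' := hG.card_c (m + 1) hDz v z hvz
  have hB := hG.card_b (m + 1) hDz u z huz
  have hB' := hG.card_b (m + 1) hDz v z hvz
  have hpt : ∀ x ∈ G.neighborFinset z, f x =
      drgPhi (Fintype.card V) D (b 0) b c m
        * ((if G.dist v x + 1 = m + 1 then (1 : ℚ) else 0)
          - (if G.dist u x + 1 = m + 1 then (1 : ℚ) else 0))
      + drgPhi (Fintype.card V) D (b 0) b c (m + 1)
        * ((if G.dist u x = m + 1 + 1 then (1 : ℚ) else 0)
          - (if G.dist v x = m + 1 + 1 then (1 : ℚ) else 0)) := by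
    intro x hx
    have hadj : G.Adj z x := by rwa [SimpleGraph.mem_neighborFinset] at hx
    have hzx : G.dist z x = 1 := SimpleGraph.dist_eq_one_iff_adj.mpr hadj
    have hxz : G.dist x z = 1 := by rw [SimpleGraph.dist_comm]; exact hzx
    have t1 : G.dist u x ≤ G.dist u z + G.dist z x := hG.connected.dist_triangle
    have t2 : G.dist u z ≤ G.dist u x + G.dist x z := hG.connected.dist_triangle
    have t3 : G.dist v x ≤ G.dist v z + G.dist z x := hG.connected.dist_triangle
    have t4 : G.dist v z ≤ G.dist v x + G.dist x z := hG.connected.dist_triangle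
    have t5 : G.dist u x ≤ G.dist u v + G.dist v x := hG.connected.dist_triangle
    have t6 : G.dist v x ≤ G.dist v u + G.dist u x := hG.connected.dist_triangle
    rcases (show G.dist u x = G.dist v x ∨ G.dist u x = G.dist v x + 1
        ∨ G.dist v x = G.dist u x + 1 by omega) with he | he | he
    · rw [hf_zero x he]
      split_ifs <;> first | ring1 | (exfalso; omega)
    · rcases (show G.dist v x = m ∨ G.dist v x = m + 1 by omega) with hv | hv
      · rw [hf_pos x m hv (by omega)]
        split_ifs <;> first | ring1 | (exfalso; omega)
      · rw [hf_pos x (m + 1) hv (by omega)]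
        split_ifs <;> first | ring1 | (exfalso; omega)
    · rcases (show G.dist u x = m ∨ G.dist u x = m + 1 by omega) with hu | hu
      · rw [hf_neg x m hu (by omega)]
        split_ifs <;> first | ring1 | (exfalso; omega)
      · rw [hf_neg x (m + 1) hu (by omega)]
        split_ifs <;> first | ring1 | (exfalso; omega)
  rw [Finset.sum_congr rfl fun x hx => by rw [hpt x hx, hfz, sub_zero]]
  simp only [Finset.sum_add_distrib, ← Finset.mul_sum, Finset.sum_sub_distrib,
    Finset.sum_boole]
  rw [hA, hA', hB, hB']
  ring

lemma aux_pos (hG : G.IsDRG D b c) (u v : V) (huv : G.Adj u v) (f : V → ℚ)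
    (hf_pos : ∀ (z : V) (i : ℕ), G.dist v z = i → G.dist u z = i + 1 →
      f z = drgPhi (Fintype.card V) D (b 0) b c i)
    (hf_neg : ∀ (z : V) (i : ℕ), G.dist u z = i → G.dist v z = i + 1 →
      f z = -(drgPhi (Fintype.card V) D (b 0) b c i))
    (hf_zero : ∀ z : V, G.dist u z = G.dist v z → f z = 0)
    (z : V) (hzv : z ≠ v) (hdz : G.dist u z = G.dist v z + 1) :
    ∑ x ∈ G.neighborFinset z, (f x - f z) = 0 := by
  have h1 : G.dist u v = 1 := SimpleGraph.dist_eq_one_iff_adj.mpr huv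
  have hvu : G.dist v u = 1 := by rw [SimpleGraph.dist_comm]; exact h1
  have hD : 1 ≤ D := h1 ▸ hG.dist_le u v
  have hvz0 : G.dist v z ≠ 0 := fun h => hzv (hG.connected.dist_eq_zero_iff.mp h).symm
  obtain ⟨m, hvz⟩ : ∃ m, G.dist v z = m + 1 := ⟨G.dist v z - 1, by omega⟩
  have huz : G.dist u z = m + 2 := by omega
  have hDz : m + 2 ≤ D := huz ▸ hG.dist_le u z
  have hfz : f z = drgPhi (Fintype.card V) D (b 0) b c (m + 1) :=
    hf_pos z (m + 1) hvz (by omega)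
  have hA := hG.card_c (m + 1) (by omega) v z hvz
  have hC := hG.card_c (m + 2) (by omega) u z huz
  have hB := hG.card_b (m + 1) (by omega) v z hvz
  have hB2 := hG.card_b (m + 2) (by omega) u z huz
  have hdeg := degree_eq hG z
  have hpt : ∀ x ∈ G.neighborFinset z, f x =
      drgPhi (Fintype.card V) D (b 0) b c (m + 1)
      + drgPhi (Fintype.card V) D (b 0) b c m
        * (if G.dist v x + 1 = m + 1 then (1 : ℚ) else 0)
      + drgPhi (Fintype.card V) D (b 0) b c (m + 2)
        * (if G.dist u x = m + 2 + 1 then (1 : ℚ) else 0)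
      - drgPhi (Fintype.card V) D (b 0) b c (m + 1)
        * (if G.dist u x + 1 = m + 2 then (1 : ℚ) else 0)
      - drgPhi (Fintype.card V) D (b 0) b c (m + 1)
        * (if G.dist v x = m + 1 + 1 then (1 : ℚ) else 0) := by
    intro x hx
    have hadj : G.Adj z x := by rwa [SimpleGraph.mem_neighborFinset] at hx
    have hzx : G.dist z x = 1 := SimpleGraph.dist_eq_one_iff_adj.mpr hadj
    have hxz : G.dist x z = 1 := by rw [SimpleGraph.dist_comm]; exact hzx
    have t1 : G.dist u x ≤ G.dist u z + G.dist z x := hG.connected.dist_triangle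
    have t2 : G.dist u z ≤ G.dist u x + G.dist x z := hG.connected.dist_triangle
    have t3 : G.dist v x ≤ G.dist v z + G.dist z x := hG.connected.dist_triangle
    have t4 : G.dist v z ≤ G.dist v x + G.dist x z := hG.connected.dist_triangle
    have t5 : G.dist u x ≤ G.dist u v + G.dist v x := hG.connected.dist_triangle
    have t6 : G.dist v x ≤ G.dist v u + G.dist u x := hG.connected.dist_triangle
    rcases (show G.dist u x = G.dist v x ∨ G.dist u x = G.dist v x + 1
        ∨ G.dist v x = G.dist u x + 1 by omega) with he | he | he
    · rw [hf_zero x he]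
      split_ifs <;> first | ring1 | (exfalso; omega)
    · rcases (show G.dist v x = m ∨ G.dist v x = m + 1 ∨ G.dist v x = m + 2 by omega)
        with hv | hv | hv
      · rw [hf_pos x m hv (by omega)]
        split_ifs <;> first | ring1 | (exfalso; omega)
      · rw [hf_pos x (m + 1) hv (by omega)]
        split_ifs <;> first | ring1 | (exfalso; omega)
      · rw [hf_pos x (m + 2) hv (by omega)]
        split_ifs <;> first | ring1 | (exfalso; omega)
    · have hu : G.dist u x = m + 1 := by omega
      rw [hf_neg x (m + 1) hu (by omega)]
      split_ifs <;> first | ring1 | (exfalso; omega)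
  have hps1 : (c (m + 1) : ℚ) * drgPhi (Fintype.card V) D (b 0) b c m
      - (b (m + 1) : ℚ) * drgPhi (Fintype.card V) D (b 0) b c (m + 1) = (b 0 : ℚ) :=
    psi hG hD (l := m) (by omega)
  have hps2 : (c (m + 2) : ℚ) * drgPhi (Fintype.card V) D (b 0) b c (m + 1)
      - (b (m + 2) : ℚ) * drgPhi (Fintype.card V) D (b 0) b c (m + 2) = (b 0 : ℚ) :=
    psi hG hD (l := m + 1) (by omega)
  rw [Finset.sum_congr rfl fun x hx => by rw [hpt x hx]]
  simp only [Finset.sum_sub_distrib, Finset.sum_add_distrib, ← Finset.mul_sum,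
    Finset.sum_boole, Finset.sum_const, nsmul_eq_mul]
  rw [hA, hC, hB, hB2, hdeg, hfz]
  linear_combination hps1 - hps2

end DRGHelper

theorem drg_potential_harmonic {V : Type*} [Fintype V] [DecidableEq V] (G : SimpleGraph V) [DecidableRel G.Adj]
    (D : ℕ) (b c : ℕ → ℕ) (hG : G.IsDRG D b c)
    (u v : V) (huv : G.Adj u v) (f : V → ℚ)
    (hf_pos : ∀ (z : V) (i : ℕ), G.dist v z = i → G.dist u z = i + 1 → f z = drgPhi (Fintype.card V) D (b 0) b c i)
    (hf_neg : ∀ (z : V) (i : ℕ), G.dist u z = i → G.dist v z = i + 1 → f z = -(drgPhi (Fintype.card V) D (b 0) b c i))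
    (hf_zero : ∀ z : V, G.dist u z = G.dist v z → f z = 0) :
    ∀ z : V, z ≠ u → z ≠ v → ∑ x ∈ G.neighborFinset z, (f x - f z) = 0 := by
  intro z hzu hzv
  have h1 : G.dist u v = 1 := SimpleGraph.dist_eq_one_iff_adj.mpr huv
  have hvu : G.dist v u = 1 := by rw [SimpleGraph.dist_comm]; exact h1
  have t1 : G.dist u z ≤ G.dist u v + G.dist v z := hG.connected.dist_triangle
  have t2 : G.dist v z ≤ G.dist v u + G.dist u z := hG.connected.dist_triangle
  rcases (show G.dist u z = G.dist v z ∨ G.dist u z = G.dist v z + 1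
      ∨ G.dist v z = G.dist u z + 1 by omega) with h | h | h
  · exact DRGHelper.aux_eq hG u v huv f hf_pos hf_neg hf_zero z hzu h
  · exact DRGHelper.aux_pos hG u v huv f hf_pos hf_neg hf_zero z hzv h
  · have h0 := DRGHelper.aux_pos hG v u huv.symm (fun y => -f y)
      (fun x i hx1 hx2 => by simp only [hf_neg x i hx1 hx2, neg_neg])
      (fun x i hx1 hx2 => by simp only [hf_pos x i hx1 hx2])
      (fun x hx => by simp only [hf_zero x hx.symm, neg_zero])
      z hzu h
    have h2 : ∑ x ∈ G.neighborFinset z, (f x - f z)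
        = -∑ x ∈ G.neighborFinset z, ((fun y => -f y) x - (fun y => -f y) z) := by
      rw [← Finset.sum_neg_distrib]
      exact Finset.sum_congr rfl fun x _ => by ring
    rw [h2, h0, neg_zero]
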